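/- Let (U, A, η, a) with twist constant K be a smooth areal solution on [R₀,R*). Then the energies 𝓔 and 𝓔_K are non-increasing: for all R₀ ≤ R ≤ R' < R*, 𝓔(R') ≤ 𝓔(R) and 𝓔_K(R') ≤ 𝓔_K(R); moreover for every R ∈ (R₀,R*), (d/dR) 𝓔(R) = − (K²/(2R³)) ∫₀^{2π} E e^{2η} dθ − (2/R) ∫₀^{2π} ( a⁻¹ (∂_R U)² + (e^{4U}/(4R²)) a (∂_θ A)² ) dθ and (d/dR) 𝓔_K(R) = − (K²/R⁵) ∫₀^{2π} a⁻¹ e^{2η} dθ − (2/R) ∫₀^{2π} ( a⁻¹ (∂_R U)² + (e^{4U}/(4R²)) a (∂_θ A)² ) dθ. -/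

import Mathlib

open Real

noncomputable section

/-- Partial derivative in the first (areal time `R`) variable. -/
def pd1 (f : ℝ → ℝ → ℝ) (x y : ℝ) : ℝ := deriv (fun s => f s y) x

/-- Partial derivative in the second (space `θ`) variable. -/
def pd2 (f : ℝ → ℝ → ℝ) (x y : ℝ) : ℝ := deriv (fun s => f x s) y

/-- The energy density `E := a⁻¹ U_R² + a U_θ² + (e^{4U}/(4R²))(a⁻¹ A_R² + a A_θ²)`. -/
def Edens (U A a : ℝ → ℝ → ℝ) (r θ : ℝ) : ℝ :=
  (a r θ)⁻¹ * (pd1 U r θ) ^ 2 + a r θ * (pd2 U r θ) ^ 2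
    + exp (4 * U r θ) / (4 * r ^ 2) *
        ((a r θ)⁻¹ * (pd1 A r θ) ^ 2 + a r θ * (pd2 A r θ) ^ 2)

/-- The flux density `F := 2 U_R U_θ + (e^{4U}/(2R²)) A_R A_θ`. -/
def Fdens (U A : ℝ → ℝ → ℝ) (r θ : ℝ) : ℝ :=
  2 * pd1 U r θ * pd2 U r θ
    + exp (4 * U r θ) / (2 * r ^ 2) * (pd1 A r θ * pd2 A r θ)

/-- A smooth solution `(U, A, η, a)` of the `T²`-symmetric vacuum Einstein equations
in areal coordinates, with twist constant `K`, on the time set `D` (times `ℝ` in the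
space variable `θ`, with all coefficients `2π`-periodic in `θ` and `a > 0`).
The equations are (A1), (A2), (A3) and the constraints (A4) of the paper. -/
structure ArealSol (D : Set ℝ) (K : ℝ) where
  U : ℝ → ℝ → ℝ
  A : ℝ → ℝ → ℝ
  η : ℝ → ℝ → ℝ
  a : ℝ → ℝ → ℝ
  smooth_U : ContDiff ℝ (⊤ : ℕ∞) (Function.uncurry U)
  smooth_A : ContDiff ℝ (⊤ : ℕ∞) (Function.uncurry A)
  smooth_η : ContDiff ℝ (⊤ : ℕ∞) (Function.uncurry η)
  smooth_a : ContDiff ℝ (⊤ : ℕ∞) (Function.uncurry a)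
  periodic_U : ∀ r θ : ℝ, U r (θ + 2 * π) = U r θ
  periodic_A : ∀ r θ : ℝ, A r (θ + 2 * π) = A r θ
  periodic_η : ∀ r θ : ℝ, η r (θ + 2 * π) = η r θ
  periodic_a : ∀ r θ : ℝ, a r (θ + 2 * π) = a r θ
  apos : ∀ r ∈ D, ∀ θ : ℝ, 0 < a r θ
  eq_U : ∀ r ∈ D, ∀ θ : ℝ,
    pd1 (fun r' θ' => r' * (a r' θ')⁻¹ * pd1 U r' θ') r θ
      - pd2 (fun r' θ' => r' * a r' θ' * pd2 U r' θ') r θ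
      = exp (4 * U r θ) / (2 * r) *
          ((a r θ)⁻¹ * (pd1 A r θ) ^ 2 - a r θ * (pd2 A r θ) ^ 2)
  eq_A : ∀ r ∈ D, ∀ θ : ℝ,
    pd1 (fun r' θ' => r'⁻¹ * (a r' θ')⁻¹ * pd1 A r' θ') r θ
      - pd2 (fun r' θ' => r'⁻¹ * a r' θ' * pd2 A r' θ') r θ
      = (4 / r) * (a r θ * pd2 U r θ * pd2 A r θ - (a r θ)⁻¹ * pd1 U r θ * pd1 A r θ)
  eq_a : ∀ r ∈ D, ∀ θ : ℝ,
    pd1 (fun r' θ' => Real.log (a r' θ')) r θ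
      = -(K ^ 2 * exp (2 * η r θ)) / (2 * r ^ 3)
  eq_ηR : ∀ r ∈ D, ∀ θ : ℝ,
    pd1 η r θ + K ^ 2 / (4 * r ^ 3) * exp (2 * η r θ) = a r θ * r * Edens U A a r θ
  eq_ηθ : ∀ r ∈ D, ∀ θ : ℝ,
    pd2 η r θ = r * Fdens U A r θ

/-- The areal energy `𝓔(R)`. -/
def En (U A a : ℝ → ℝ → ℝ) (r : ℝ) : ℝ :=
  ∫ θ in (0:ℝ)..(2 * π), Edens U A a r θ

/-- The modified areal energy `𝓔_K(R)`. -/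
def EnK (K : ℝ) (U A η a : ℝ → ℝ → ℝ) (r : ℝ) : ℝ :=
  ∫ θ in (0:ℝ)..(2 * π),
    (Edens U A a r θ + K ^ 2 / (4 * r ^ 4) * exp (2 * η r θ) * (a r θ)⁻¹)

end



noncomputable section Helpers

set_option maxHeartbeats 2000000

variable {f : ℝ → ℝ → ℝ}

lemma diff_slice1 (hf : ContDiff ℝ (⊤:ℕ∞) (Function.uncurry f)) (x y : ℝ) :
    DifferentiableAt ℝ (fun s => f s y) x := by
  have : (fun s => f s y) = Function.uncurry f ∘ (fun s => (s, y)) := rfl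
  rw [this]
  exact (hf.differentiable (by simp) (x, y)).comp x (differentiableAt_id.prodMk (differentiableAt_const y))

lemma diff_slice2 (hf : ContDiff ℝ (⊤:ℕ∞) (Function.uncurry f)) (x y : ℝ) :
    DifferentiableAt ℝ (fun t => f x t) y := by
  have : (fun t => f x t) = Function.uncurry f ∘ (fun t => (x, t)) := rfl
  rw [this]
  exact (hf.differentiable (by simp) (x, y)).comp y ((differentiableAt_const x).prodMk differentiableAt_id)

lemma hasDerivAt_pd1 (hf : ContDiff ℝ (⊤:ℕ∞) (Function.uncurry f)) (x y : ℝ) :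
    HasDerivAt (fun s => f s y) (pd1 f x y) x := (diff_slice1 hf x y).hasDerivAt

lemma hasDerivAt_pd2 (hf : ContDiff ℝ (⊤:ℕ∞) (Function.uncurry f)) (x y : ℝ) :
    HasDerivAt (fun t => f x t) (pd2 f x y) y := (diff_slice2 hf x y).hasDerivAt

lemma pd1_eq_fderiv (hf : ContDiff ℝ (⊤:ℕ∞) (Function.uncurry f)) (x y : ℝ) :
    pd1 f x y = fderiv ℝ (Function.uncurry f) (x, y) (1, 0) := by
  have h1 : HasDerivAt (fun s => (s, y)) ((1:ℝ), (0:ℝ)) x :=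
    (hasDerivAt_id x).prodMk (hasDerivAt_const x y)
  have h2 := ((hf.differentiable (by simp) (x, y)).hasFDerivAt).comp_hasDerivAt x h1
  have h2' : HasDerivAt (fun s => f s y) (fderiv ℝ (Function.uncurry f) (x, y) (1, 0)) x := h2
  exact h2'.deriv

lemma pd2_eq_fderiv (hf : ContDiff ℝ (⊤:ℕ∞) (Function.uncurry f)) (x y : ℝ) :
    pd2 f x y = fderiv ℝ (Function.uncurry f) (x, y) (0, 1) := by
  have h1 : HasDerivAt (fun t => (x, t)) ((0:ℝ), (1:ℝ)) y :=
    (hasDerivAt_const y x).prodMk (hasDerivAt_id y)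
  have h2 := ((hf.differentiable (by simp) (x, y)).hasFDerivAt).comp_hasDerivAt y h1
  have h2' : HasDerivAt (fun t => f x t) (fderiv ℝ (Function.uncurry f) (x, y) (0, 1)) y := h2
  exact h2'.deriv

lemma contDiff_pd1 (hf : ContDiff ℝ (⊤:ℕ∞) (Function.uncurry f)) :
    ContDiff ℝ (⊤:ℕ∞) (Function.uncurry (pd1 f)) := by
  have h1 : ContDiff ℝ (⊤:ℕ∞) (fderiv ℝ (Function.uncurry f)) :=
    hf.fderiv_right (by exact_mod_cast le_top)
  have h2 : ContDiff ℝ (⊤:ℕ∞) (fun p : ℝ × ℝ => fderiv ℝ (Function.uncurry f) p (1, 0)) :=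
    h1.clm_apply contDiff_const
  have : Function.uncurry (pd1 f) = fun p : ℝ × ℝ => fderiv ℝ (Function.uncurry f) p (1, 0) := by
    ext p; exact pd1_eq_fderiv hf p.1 p.2
  rw [this]; exact h2

lemma contDiff_pd2 (hf : ContDiff ℝ (⊤:ℕ∞) (Function.uncurry f)) :
    ContDiff ℝ (⊤:ℕ∞) (Function.uncurry (pd2 f)) := by
  have h1 : ContDiff ℝ (⊤:ℕ∞) (fderiv ℝ (Function.uncurry f)) :=
    hf.fderiv_right (by exact_mod_cast le_top)
  have h2 : ContDiff ℝ (⊤:ℕ∞) (fun p : ℝ × ℝ => fderiv ℝ (Function.uncurry f) p (0, 1)) :=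
    h1.clm_apply contDiff_const
  have : Function.uncurry (pd2 f) = fun p : ℝ × ℝ => fderiv ℝ (Function.uncurry f) p (0, 1) := by
    ext p; exact pd2_eq_fderiv hf p.1 p.2
  rw [this]; exact h2

lemma clairaut (hf : ContDiff ℝ (⊤:ℕ∞) (Function.uncurry f)) (x y : ℝ) :
    pd1 (pd2 f) x y = pd2 (pd1 f) x y := by
  set F := Function.uncurry f with hF
  set g := fderiv ℝ F with hg
  have hgsm : ContDiff ℝ (⊤:ℕ∞) g := hf.fderiv_right (by exact_mod_cast le_top)
  have hgd : Differentiable ℝ g := hgsm.differentiable (by simp)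
  set f'' := fderiv ℝ g (x, y) with hf''
  have hsym : ∀ v w : ℝ × ℝ, f'' v w = f'' w v := by
    intro v w
    exact second_derivative_symmetric
      (fun p => ((hf.differentiable (by simp)) p).hasFDerivAt)
      ((hgd (x, y)).hasFDerivAt) v w
  have h1 : pd1 (pd2 f) x y = f'' (1, 0) (0, 1) := by
    have hline : HasDerivAt (fun s : ℝ => (s, y)) ((1:ℝ), (0:ℝ)) x :=
      (hasDerivAt_id x).prodMk (hasDerivAt_const x y)
    have hc : HasDerivAt (fun s : ℝ => g (s, y)) (f'' (1, 0)) x :=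
      ((hgd (x, y)).hasFDerivAt).comp_hasDerivAt x hline
    have happ : HasDerivAt (fun s : ℝ => g (s, y) ((0:ℝ), (1:ℝ)))
        (f'' (1, 0) ((0:ℝ), (1:ℝ))) x := by
      have := hc.clm_apply (hasDerivAt_const x ((0:ℝ), (1:ℝ)))
      simpa using this
    have heq : (fun s : ℝ => pd2 f s y) = fun s : ℝ => g (s, y) ((0:ℝ), (1:ℝ)) := by
      funext s; exact pd2_eq_fderiv hf s y
    show deriv (fun s : ℝ => pd2 f s y) x = _
    rw [heq]; exact happ.deriv
  have h2 : pd2 (pd1 f) x y = f'' (0, 1) (1, 0) := by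
    have hline : HasDerivAt (fun t : ℝ => (x, t)) ((0:ℝ), (1:ℝ)) y :=
      (hasDerivAt_const y x).prodMk (hasDerivAt_id y)
    have hc : HasDerivAt (fun t : ℝ => g (x, t)) (f'' (0, 1)) y :=
      ((hgd (x, y)).hasFDerivAt).comp_hasDerivAt y hline
    have happ : HasDerivAt (fun t : ℝ => g (x, t) ((1:ℝ), (0:ℝ)))
        (f'' (0, 1) ((1:ℝ), (0:ℝ))) y := by
      have := hc.clm_apply (hasDerivAt_const y ((1:ℝ), (0:ℝ)))
      simpa using this
    have heq : (fun t : ℝ => pd1 f x t) = fun t : ℝ => g (x, t) ((1:ℝ), (0:ℝ)) := by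
      funext t; exact pd1_eq_fderiv hf x t
    show deriv (fun t : ℝ => pd1 f x t) y = _
    rw [heq]; exact happ.deriv
  rw [h1, h2, hsym]

lemma pd1_periodic (hper : ∀ r θ : ℝ, f r (θ + 2*π) = f r θ) (x y : ℝ) :
    pd1 f x (y + 2*π) = pd1 f x y := by
  unfold pd1; congr 1; funext s; exact hper s y

lemma pd2_periodic (hf : ContDiff ℝ (⊤:ℕ∞) (Function.uncurry f))
    (hper : ∀ r θ : ℝ, f r (θ + 2*π) = f r θ) (x y : ℝ) :
    pd2 f x (y + 2*π) = pd2 f x y := by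
  have h1 : deriv (fun t => f x (t + 2*π)) y = deriv (fun t => f x t) (y + 2*π) :=
    deriv_comp_add_const (fun t => f x t) (2*π) y
  have h2 : (fun t => f x (t + 2*π)) = fun t => f x t := funext fun t => hper x t
  show deriv (fun t => f x t) (y + 2*π) = deriv (fun t => f x t) y
  rw [← h1, h2]

/-- The explicit `θ`-derivative of `a·F`. -/
def divterm (U A a : ℝ → ℝ → ℝ) (r θ : ℝ) : ℝ :=
  pd2 a r θ * (2 * pd1 U r θ * pd2 U r θ
      + exp (4 * U r θ) / (2 * r ^ 2) * (pd1 A r θ * pd2 A r θ))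
    + a r θ * (2 * pd2 (pd1 U) r θ * pd2 U r θ + 2 * pd1 U r θ * pd2 (pd2 U) r θ
      + exp (4 * U r θ) * (4 * pd2 U r θ) / (2 * r ^ 2) * (pd1 A r θ * pd2 A r θ)
      + exp (4 * U r θ) / (2 * r ^ 2) *
          (pd2 (pd1 A) r θ * pd2 A r θ + pd1 A r θ * pd2 (pd2 A) r θ))

variable {U A η a : ℝ → ℝ → ℝ}

lemma hasDerivAt_aF (hU : ContDiff ℝ (⊤:ℕ∞) (Function.uncurry U))
    (hA : ContDiff ℝ (⊤:ℕ∞) (Function.uncurry A))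
    (ha : ContDiff ℝ (⊤:ℕ∞) (Function.uncurry a)) (r θ : ℝ) :
    HasDerivAt (fun t => a r t * Fdens U A r t) (divterm U A a r θ) θ := by
  have h1 := hasDerivAt_pd2 ha r θ
  have h2 := hasDerivAt_pd2 hU r θ
  have h3 := hasDerivAt_pd2 (contDiff_pd1 hU) r θ
  have h4 := hasDerivAt_pd2 (contDiff_pd2 hU) r θ
  have h5 := hasDerivAt_pd2 (contDiff_pd1 hA) r θ
  have h6 := hasDerivAt_pd2 (contDiff_pd2 hA) r θ
  have hexp : HasDerivAt (fun t => Real.exp (4 * U r t))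
      (Real.exp (4 * U r θ) * (4 * pd2 U r θ)) θ := (h2.const_mul 4).exp
  have hF := ((h3.const_mul 2).mul h4).add ((hexp.div_const (2*r^2)).mul (h5.mul h6))
  have H := h1.mul hF
  simp only [Fdens]
  refine H.congr_deriv (Eq.symm ?_)
  simp only [Pi.mul_apply, Pi.inv_apply, Pi.div_apply, Pi.pow_apply, Pi.add_apply]
  simp only [divterm]
  ring

/-- Pointwise `R`-derivative of the energy density, rewritten using the field equations. -/
lemma hasDerivAt_Edens_slice {K : ℝ}
    (hU : ContDiff ℝ (⊤:ℕ∞) (Function.uncurry U))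
    (hA : ContDiff ℝ (⊤:ℕ∞) (Function.uncurry A))
    (ha : ContDiff ℝ (⊤:ℕ∞) (Function.uncurry a))
    (r θ : ℝ) (hr : r ≠ 0) (hav : a r θ ≠ 0)
    (heqU : pd1 (fun r' θ' => r' * (a r' θ')⁻¹ * pd1 U r' θ') r θ
      - pd2 (fun r' θ' => r' * a r' θ' * pd2 U r' θ') r θ
      = exp (4 * U r θ) / (2 * r) *
          ((a r θ)⁻¹ * (pd1 A r θ) ^ 2 - a r θ * (pd2 A r θ) ^ 2))
    (heqA : pd1 (fun r' θ' => r'⁻¹ * (a r' θ')⁻¹ * pd1 A r' θ') r θ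
      - pd2 (fun r' θ' => r'⁻¹ * a r' θ' * pd2 A r' θ') r θ
      = (4 / r) * (a r θ * pd2 U r θ * pd2 A r θ - (a r θ)⁻¹ * pd1 U r θ * pd1 A r θ))
    (heqa : pd1 (fun r' θ' => Real.log (a r' θ')) r θ
      = -(K ^ 2 * exp (2 * η r θ)) / (2 * r ^ 3)) :
    HasDerivAt (fun s => Edens U A a s θ)
      (divterm U A a r θ
        - K ^ 2 / (2 * r ^ 3) * (Edens U A a r θ * exp (2 * η r θ))
        - (2 / r) * ((a r θ)⁻¹ * (pd1 U r θ) ^ 2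
            + exp (4 * U r θ) / (4 * r ^ 2) * a r θ * (pd2 A r θ) ^ 2)) r := by
  -- basic HasDerivAt facts at (r, θ) in the first variable
  have haR := hasDerivAt_pd1 ha r θ
  have hUp := hasDerivAt_pd1 hU r θ
  have hURR := hasDerivAt_pd1 (contDiff_pd1 hU) r θ
  have hUθR := hasDerivAt_pd1 (contDiff_pd2 hU) r θ
  have hARR := hasDerivAt_pd1 (contDiff_pd1 hA) r θ
  have hAθR := hasDerivAt_pd1 (contDiff_pd2 hA) r θ
  have hinv := haR.inv hav
  have hexp : HasDerivAt (fun s => Real.exp (4 * U s θ))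
      (Real.exp (4 * U r θ) * (4 * pd1 U r θ)) r := (hUp.const_mul 4).exp
  -- expand the three equations into pointwise form
  have hden : HasDerivAt (fun s : ℝ => 4 * s ^ 2) (4 * (2 * r ^ 1)) r :=
    (hasDerivAt_pow 2 r).const_mul 4
  -- expansion of eq_U
  have e1 : pd1 (fun r' θ' => r' * (a r' θ')⁻¹ * pd1 U r' θ') r θ
      = (1 * (a r θ)⁻¹ + r * (-(pd1 a r θ) / (a r θ) ^ 2)) * pd1 U r θ
        + r * (a r θ)⁻¹ * pd1 (pd1 U) r θ := by
    have h := ((hasDerivAt_id r).mul hinv).mul hURR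
    exact h.deriv
  have e2 : pd2 (fun r' θ' => r' * a r' θ' * pd2 U r' θ') r θ
      = (0 * a r θ + r * pd2 a r θ) * pd2 U r θ
        + r * a r θ * pd2 (pd2 U) r θ := by
    have h := (((hasDerivAt_const θ r).mul (hasDerivAt_pd2 ha r θ)).mul
      (hasDerivAt_pd2 (contDiff_pd2 hU) r θ))
    exact h.deriv
  have e3 : pd1 (fun r' θ' => r'⁻¹ * (a r' θ')⁻¹ * pd1 A r' θ') r θ
      = ((-1 / r ^ 2) * (a r θ)⁻¹ + r⁻¹ * (-(pd1 a r θ) / (a r θ) ^ 2)) * pd1 A r θ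
        + r⁻¹ * (a r θ)⁻¹ * pd1 (pd1 A) r θ := by
    have hid : HasDerivAt (fun s : ℝ => s⁻¹) (-1 / r ^ 2) r := by
      exact (hasDerivAt_inv hr).congr_deriv (by ring)
    have h := (hid.mul hinv).mul hARR
    exact h.deriv
  have e4 : pd2 (fun r' θ' => r'⁻¹ * a r' θ' * pd2 A r' θ') r θ
      = (0 * a r θ + r⁻¹ * pd2 a r θ) * pd2 A r θ
        + r⁻¹ * a r θ * pd2 (pd2 A) r θ := by
    have h := (((hasDerivAt_const θ r⁻¹).mul (hasDerivAt_pd2 ha r θ)).mul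
      (hasDerivAt_pd2 (contDiff_pd2 hA) r θ))
    exact h.deriv
  have e5 : pd1 (fun r' θ' => Real.log (a r' θ')) r θ = pd1 a r θ / a r θ := by
    have h := haR.log hav
    exact h.deriv
  rw [e1, e2] at heqU
  rw [e3, e4] at heqA
  rw [e5] at heqa
  -- the raw derivative of the energy density slice
  have T1 := hinv.mul (hURR.pow 2)
  have T2 := haR.mul (hUθR.pow 2)
  have Tq := hexp.div hden (by positivity)
  have T3 := Tq.mul ((hinv.mul (hARR.pow 2)).add (haR.mul (hAθR.pow 2)))
  have H := (T1.add T2).add T3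
  simp only [Edens, divterm]
  refine H.congr_deriv (Eq.symm ?_)
  simp only [Pi.mul_apply, Pi.inv_apply, Pi.div_apply, Pi.pow_apply, Pi.add_apply]
  -- now pure algebra using heqU, heqA, heqa
  rw [clairaut hU, clairaut hA]
  set av := a r θ
  set aR := pd1 a r θ
  set aθ := pd2 a r θ
  set UR := pd1 U r θ
  set Uθ := pd2 U r θ
  set MU := pd2 (pd1 U) r θ
  set Uθθ := pd2 (pd2 U) r θ
  set URR := pd1 (pd1 U) r θ
  set AR := pd1 A r θ
  set Aθ := pd2 A r θ
  set MA := pd2 (pd1 A) r θ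
  set Aθθ := pd2 (pd2 A) r θ
  set ARR := pd1 (pd1 A) r θ
  set eU := Real.exp (4 * U r θ)
  set eη := Real.exp (2 * η r θ)
  -- solve for aR, URR, ARR
  have haRv : aR = -(K ^ 2 * eη) / (2 * r ^ 3) * av := by
    field_simp at heqa ⊢
    linarith
  rw [haRv] at heqU heqA
  have hURRv : URR = (av / r) * (eU / (2 * r) * (av⁻¹ * AR ^ 2 - av * Aθ ^ 2)
      + (0 * av + r * aθ) * Uθ + r * av * Uθθ
      - (1 * av⁻¹ + r * (-(-(K ^ 2 * eη) / (2 * r ^ 3) * av) / av ^ 2)) * UR) := by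
    field_simp at heqU ⊢
    ring_nf at heqU ⊢
    linarith
  have hARRv : ARR = (av * r) * ((4 / r) * (av * Uθ * Aθ - av⁻¹ * UR * AR)
      + (0 * av + r⁻¹ * aθ) * Aθ + r⁻¹ * av * Aθθ
      - ((-1 / r ^ 2) * av⁻¹ + r⁻¹ * (-(-(K ^ 2 * eη) / (2 * r ^ 3) * av) / av ^ 2)) * AR) := by
    linear_combination (norm := skip) (av * r) * heqA
    field_simp
    ring
  rw [haRv, hURRv, hARRv]
  field_simp
  ring

lemma hasDerivAt_Kterm_slice {K : ℝ}
    (hU : ContDiff ℝ (⊤:ℕ∞) (Function.uncurry U))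
    (hA : ContDiff ℝ (⊤:ℕ∞) (Function.uncurry A))
    (hη : ContDiff ℝ (⊤:ℕ∞) (Function.uncurry η))
    (ha : ContDiff ℝ (⊤:ℕ∞) (Function.uncurry a))
    (r θ : ℝ) (hr : r ≠ 0) (hav : a r θ ≠ 0)
    (heqa : pd1 (fun r' θ' => Real.log (a r' θ')) r θ
      = -(K ^ 2 * exp (2 * η r θ)) / (2 * r ^ 3))
    (heqη : pd1 η r θ + K ^ 2 / (4 * r ^ 3) * exp (2 * η r θ)
      = a r θ * r * Edens U A a r θ) :
    HasDerivAt (fun s => K ^ 2 / (4 * s ^ 4) * exp (2 * η s θ) * (a s θ)⁻¹)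
      (-(K ^ 2 / r ^ 5) * (exp (2 * η r θ) * (a r θ)⁻¹)
        + K ^ 2 / (2 * r ^ 3) * (Edens U A a r θ * exp (2 * η r θ))) r := by
  have haR := hasDerivAt_pd1 ha r θ
  have hinv := haR.inv hav
  have hexpη : HasDerivAt (fun s => Real.exp (2 * η s θ))
      (Real.exp (2 * η r θ) * (2 * pd1 η r θ)) r := ((hasDerivAt_pd1 hη r θ).const_mul 2).exp
  have hden : HasDerivAt (fun s : ℝ => 4 * s ^ 4) (4 * (4 * r ^ 3)) r :=
    (hasDerivAt_pow 4 r).const_mul 4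
  have hc : HasDerivAt (fun s : ℝ => K ^ 2 / (4 * s ^ 4))
      ((0 * (4 * r ^ 4) - K ^ 2 * (4 * (4 * r ^ 3))) / (4 * r ^ 4) ^ 2) r :=
    (hasDerivAt_const r (K ^ 2)).div hden (by positivity)
  have H := (hc.mul hexpη).mul hinv
  have e5 : pd1 (fun r' θ' => Real.log (a r' θ')) r θ = pd1 a r θ / a r θ :=
    (haR.log hav).deriv
  rw [e5] at heqa
  refine H.congr_deriv (Eq.symm ?_)
  simp only [Pi.mul_apply, Pi.inv_apply, Pi.div_apply, Pi.pow_apply, Pi.add_apply]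
  have haRv : pd1 a r θ = -(K ^ 2 * exp (2 * η r θ)) / (2 * r ^ 3) * a r θ := by
    field_simp at heqa ⊢
    linarith
  have hηRv : pd1 η r θ = a r θ * r * Edens U A a r θ
      - K ^ 2 / (4 * r ^ 3) * exp (2 * η r θ) := by linarith
  rw [haRv, hηRv]
  field_simp
  ring

lemma contv {g : ℝ → ℝ → ℝ} (h : ContDiff ℝ (⊤:ℕ∞) (Function.uncurry g)) :
    Continuous (fun p : ℝ × ℝ => g p.1 p.2) := h.continuous

lemma contOn_Edens (hU : ContDiff ℝ (⊤:ℕ∞) (Function.uncurry U))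
    (hA : ContDiff ℝ (⊤:ℕ∞) (Function.uncurry A))
    (ha : ContDiff ℝ (⊤:ℕ∞) (Function.uncurry a))
    {T : Set (ℝ × ℝ)} (hT1 : ∀ p ∈ T, p.1 ≠ 0) (hT2 : ∀ p ∈ T, a p.1 p.2 ≠ 0) :
    ContinuousOn (fun p : ℝ × ℝ => Edens U A a p.1 p.2) T := by
  have cU := contv hU
  have ca := contv ha
  have cU1 := contv (contDiff_pd1 hU)
  have cU2 := contv (contDiff_pd2 hU)
  have cA1 := contv (contDiff_pd1 hA)
  have cA2 := contv (contDiff_pd2 hA)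
  have cinv : ContinuousOn (fun p : ℝ × ℝ => (a p.1 p.2)⁻¹) T := ca.continuousOn.inv₀ hT2
  have cexp : Continuous (fun p : ℝ × ℝ => Real.exp (4 * U p.1 p.2)) :=
    Real.continuous_exp.comp (continuous_const.mul cU)
  have cq : ContinuousOn (fun p : ℝ × ℝ => Real.exp (4 * U p.1 p.2) / (4 * p.1 ^ 2)) T := by
    apply cexp.continuousOn.div (by fun_prop)
    intro p hp
    have := hT1 p hp
    positivity
  simp only [Edens]
  exact ((cinv.mul (cU1.pow 2).continuousOn).add
    (ca.continuousOn.mul (cU2.pow 2).continuousOn)).add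
    (cq.mul ((cinv.mul (cA1.pow 2).continuousOn).add
      (ca.continuousOn.mul (cA2.pow 2).continuousOn)))

lemma contOn_divterm (hU : ContDiff ℝ (⊤:ℕ∞) (Function.uncurry U))
    (hA : ContDiff ℝ (⊤:ℕ∞) (Function.uncurry A))
    (ha : ContDiff ℝ (⊤:ℕ∞) (Function.uncurry a))
    {T : Set (ℝ × ℝ)} (hT1 : ∀ p ∈ T, p.1 ≠ 0) :
    ContinuousOn (fun p : ℝ × ℝ => divterm U A a p.1 p.2) T := by
  have cU := contv hU
  have ca := contv ha
  have cU1 := contv (contDiff_pd1 hU)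
  have cU2 := contv (contDiff_pd2 hU)
  have cA1 := contv (contDiff_pd1 hA)
  have cA2 := contv (contDiff_pd2 hA)
  have ca2 := contv (contDiff_pd2 ha)
  have cMU := contv (contDiff_pd2 (contDiff_pd1 hU))
  have cU22 := contv (contDiff_pd2 (contDiff_pd2 hU))
  have cMA := contv (contDiff_pd2 (contDiff_pd1 hA))
  have cA22 := contv (contDiff_pd2 (contDiff_pd2 hA))
  have cexp : Continuous (fun p : ℝ × ℝ => Real.exp (4 * U p.1 p.2)) :=
    Real.continuous_exp.comp (continuous_const.mul cU)
  have hden : ∀ p ∈ T, 2 * p.1 ^ 2 ≠ 0 := by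
    intro p hp; have := hT1 p hp; positivity
  have cq : ContinuousOn (fun p : ℝ × ℝ => Real.exp (4 * U p.1 p.2) / (2 * p.1 ^ 2)) T :=
    cexp.continuousOn.div (by fun_prop) hden
  have cq2 : ContinuousOn
      (fun p : ℝ × ℝ => Real.exp (4 * U p.1 p.2) * (4 * pd2 U p.1 p.2) / (2 * p.1 ^ 2)) T :=
    (cexp.mul (continuous_const.mul cU2)).continuousOn.div (by fun_prop) hden
  simp only [divterm]
  apply ContinuousOn.add
  · exact ca2.continuousOn.mul (((continuous_const.mul cU1).mul cU2).continuousOn.add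
      (cq.mul (cA1.mul cA2).continuousOn))
  · apply ca.continuousOn.mul
    apply ContinuousOn.add
    apply ContinuousOn.add
    apply ContinuousOn.add
    · exact ((continuous_const.mul cMU).mul cU2).continuousOn
    · exact ((continuous_const.mul cU1).mul cU22).continuousOn
    · exact cq2.mul (cA1.mul cA2).continuousOn
    · exact cq.mul ((cMA.mul cA2).continuousOn.add (cA1.mul cA22).continuousOn)

/-- The non-divergence part of the derivative of the energy density. -/
def Ndens (U A a : ℝ → ℝ → ℝ) (r θ : ℝ) : ℝ :=
  (a r θ)⁻¹ * (pd1 U r θ) ^ 2 + exp (4 * U r θ) / (4 * r ^ 2) * a r θ * (pd2 A r θ) ^ 2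

def Gdens (K : ℝ) (U A η a : ℝ → ℝ → ℝ) (r θ : ℝ) : ℝ :=
  divterm U A a r θ - K ^ 2 / (2 * r ^ 3) * (Edens U A a r θ * exp (2 * η r θ))
    - (2 / r) * Ndens U A a r θ

def GdensK (K : ℝ) (U A η a : ℝ → ℝ → ℝ) (r θ : ℝ) : ℝ :=
  divterm U A a r θ - K ^ 2 / r ^ 5 * (exp (2 * η r θ) * (a r θ)⁻¹)
    - (2 / r) * Ndens U A a r θ

lemma contOn_Ndens (hU : ContDiff ℝ (⊤:ℕ∞) (Function.uncurry U))
    (hA : ContDiff ℝ (⊤:ℕ∞) (Function.uncurry A))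
    (ha : ContDiff ℝ (⊤:ℕ∞) (Function.uncurry a))
    {T : Set (ℝ × ℝ)} (hT1 : ∀ p ∈ T, p.1 ≠ 0) (hT2 : ∀ p ∈ T, a p.1 p.2 ≠ 0) :
    ContinuousOn (fun p : ℝ × ℝ => Ndens U A a p.1 p.2) T := by
  have cU := contv hU
  have ca := contv ha
  have cU1 := contv (contDiff_pd1 hU)
  have cA2 := contv (contDiff_pd2 hA)
  have cinv : ContinuousOn (fun p : ℝ × ℝ => (a p.1 p.2)⁻¹) T := ca.continuousOn.inv₀ hT2
  have cexp : Continuous (fun p : ℝ × ℝ => Real.exp (4 * U p.1 p.2)) :=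
    Real.continuous_exp.comp (continuous_const.mul cU)
  have cq : ContinuousOn (fun p : ℝ × ℝ => Real.exp (4 * U p.1 p.2) / (4 * p.1 ^ 2)) T := by
    apply cexp.continuousOn.div (by fun_prop)
    intro p hp; have := hT1 p hp; positivity
  simp only [Ndens]
  exact (cinv.mul (cU1.pow 2).continuousOn).add
    ((cq.mul ca.continuousOn).mul (cA2.pow 2).continuousOn)

lemma contOn_expη (hη : ContDiff ℝ (⊤:ℕ∞) (Function.uncurry η)) :
    Continuous (fun p : ℝ × ℝ => Real.exp (2 * η p.1 p.2)) :=
  Real.continuous_exp.comp (continuous_const.mul (contv hη))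

lemma contOn_Gdens {K : ℝ} (hU : ContDiff ℝ (⊤:ℕ∞) (Function.uncurry U))
    (hA : ContDiff ℝ (⊤:ℕ∞) (Function.uncurry A))
    (hη : ContDiff ℝ (⊤:ℕ∞) (Function.uncurry η))
    (ha : ContDiff ℝ (⊤:ℕ∞) (Function.uncurry a))
    {T : Set (ℝ × ℝ)} (hT1 : ∀ p ∈ T, p.1 ≠ 0) (hT2 : ∀ p ∈ T, a p.1 p.2 ≠ 0) :
    ContinuousOn (fun p : ℝ × ℝ => Gdens K U A η a p.1 p.2) T := by
  simp only [Gdens]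
  apply ContinuousOn.sub
  apply ContinuousOn.sub
  · exact contOn_divterm hU hA ha hT1
  · apply ContinuousOn.mul
    · exact (continuousOn_const.div (by fun_prop) (by intro p hp; have := hT1 p hp; positivity))
    · exact (contOn_Edens hU hA ha hT1 hT2).mul (contOn_expη hη).continuousOn
  · exact (continuousOn_const.div (by fun_prop) hT1).mul (contOn_Ndens hU hA ha hT1 hT2)

lemma contOn_GdensK {K : ℝ} (hU : ContDiff ℝ (⊤:ℕ∞) (Function.uncurry U))
    (hA : ContDiff ℝ (⊤:ℕ∞) (Function.uncurry A))
    (hη : ContDiff ℝ (⊤:ℕ∞) (Function.uncurry η))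
    (ha : ContDiff ℝ (⊤:ℕ∞) (Function.uncurry a))
    {T : Set (ℝ × ℝ)} (hT1 : ∀ p ∈ T, p.1 ≠ 0) (hT2 : ∀ p ∈ T, a p.1 p.2 ≠ 0) :
    ContinuousOn (fun p : ℝ × ℝ => GdensK K U A η a p.1 p.2) T := by
  simp only [GdensK]
  apply ContinuousOn.sub
  apply ContinuousOn.sub
  · exact contOn_divterm hU hA ha hT1
  · apply ContinuousOn.mul
    · exact (continuousOn_const.div (by fun_prop) (by intro p hp; have := hT1 p hp; positivity))
    · exact (contOn_expη hη).continuousOn.mul ((contv ha).continuousOn.inv₀ hT2)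
  · exact (continuousOn_const.div (by fun_prop) hT1).mul (contOn_Ndens hU hA ha hT1 hT2)

lemma contOn_EdensK {K : ℝ} (hU : ContDiff ℝ (⊤:ℕ∞) (Function.uncurry U))
    (hA : ContDiff ℝ (⊤:ℕ∞) (Function.uncurry A))
    (hη : ContDiff ℝ (⊤:ℕ∞) (Function.uncurry η))
    (ha : ContDiff ℝ (⊤:ℕ∞) (Function.uncurry a))
    {T : Set (ℝ × ℝ)} (hT1 : ∀ p ∈ T, p.1 ≠ 0) (hT2 : ∀ p ∈ T, a p.1 p.2 ≠ 0) :
    ContinuousOn (fun p : ℝ × ℝ =>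
      Edens U A a p.1 p.2 + K ^ 2 / (4 * p.1 ^ 4) * Real.exp (2 * η p.1 p.2) * (a p.1 p.2)⁻¹) T := by
  apply (contOn_Edens hU hA ha hT1 hT2).add
  apply ContinuousOn.mul
  apply ContinuousOn.mul
  · exact (continuousOn_const.div (by fun_prop) (by intro p hp; have := hT1 p hp; positivity))
  · exact (contOn_expη hη).continuousOn
  · exact (contv ha).continuousOn.inv₀ hT2

lemma contSliceθ {g : ℝ × ℝ → ℝ} {T : Set (ℝ × ℝ)}
    (h : ContinuousOn g T) {r : ℝ}
    (hT : ∀ θ : ℝ, (r, θ) ∈ T) : Continuous (fun θ => g (r, θ)) := by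
  rw [← continuousOn_univ]
  exact h.comp (continuous_const.prodMk continuous_id).continuousOn
    (fun θ _ => hT θ)

lemma contSliceR {g : ℝ × ℝ → ℝ} {T : Set (ℝ × ℝ)} {s : Set ℝ}
    (h : ContinuousOn g T) {θ : ℝ}
    (hT : ∀ r ∈ s, (r, θ) ∈ T) : ContinuousOn (fun r => g (r, θ)) s :=
  h.comp (continuous_id.prodMk continuous_const).continuousOn (fun r hr => hT r hr)

lemma Fdens_periodic (hU : ContDiff ℝ (⊤:ℕ∞) (Function.uncurry U))
    (hA : ContDiff ℝ (⊤:ℕ∞) (Function.uncurry A))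
    (hpU : ∀ r θ : ℝ, U r (θ + 2*π) = U r θ) (hpA : ∀ r θ : ℝ, A r (θ + 2*π) = A r θ)
    (r θ : ℝ) : Fdens U A r (θ + 2*π) = Fdens U A r θ := by
  simp only [Fdens, pd1_periodic hpU, pd2_periodic hU hpU, pd1_periodic hpA,
    pd2_periodic hA hpA, hpU]

lemma integral_divterm_zero (hU : ContDiff ℝ (⊤:ℕ∞) (Function.uncurry U))
    (hA : ContDiff ℝ (⊤:ℕ∞) (Function.uncurry A))
    (ha : ContDiff ℝ (⊤:ℕ∞) (Function.uncurry a))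
    (hpU : ∀ r θ : ℝ, U r (θ + 2*π) = U r θ) (hpA : ∀ r θ : ℝ, A r (θ + 2*π) = A r θ)
    (hpa : ∀ r θ : ℝ, a r (θ + 2*π) = a r θ)
    {r : ℝ} (hr : r ≠ 0) :
    ∫ θ in (0:ℝ)..(2*π), divterm U A a r θ = 0 := by
  have hd : ∀ θ ∈ Set.uIcc (0:ℝ) (2*π), HasDerivAt (fun t => a r t * Fdens U A r t)
      (divterm U A a r θ) θ := fun θ _ => hasDerivAt_aF hU hA ha r θ
  have hcont : Continuous (fun θ => divterm U A a r θ) :=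
    contSliceθ (T := {p : ℝ × ℝ | p.1 ≠ 0}) (contOn_divterm hU hA ha (fun p hp => hp))
      (fun θ => hr)
  rw [intervalIntegral.integral_eq_sub_of_hasDerivAt hd (hcont.intervalIntegrable _ _)]
  have h2π : (2:ℝ) * π = 0 + 2 * π := by ring
  rw [h2π, hpa r 0, Fdens_periodic hU hA hpU hpA r 0]
  ring


section main
variable {R₀ Rs K : ℝ} (S : ArealSol (Set.Ico R₀ Rs) K)

lemma hT1' (hR₀ : 0 < R₀) : ∀ p ∈ (Set.Ico R₀ Rs ×ˢ (Set.univ : Set ℝ)), p.1 ≠ 0 :=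
  fun p hp => ne_of_gt (lt_of_lt_of_le hR₀ hp.1.1)

lemma hT2' : ∀ p ∈ (Set.Ico R₀ Rs ×ˢ (Set.univ : Set ℝ)), S.a p.1 p.2 ≠ 0 :=
  fun p hp => ne_of_gt (S.apos p.1 hp.1 p.2)

lemma En_hasDerivAt (hR₀ : 0 < R₀) {r : ℝ} (hr : r ∈ Set.Ioo R₀ Rs) :
    HasDerivAt (En S.U S.A S.a) (∫ θ in (0:ℝ)..(2 * π), Gdens K S.U S.A S.η S.a r θ) r := by
  obtain ⟨hr1, hr2⟩ := hr
  set ε := min ((r - R₀)/2) ((Rs - r)/2) with hεdef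
  have hε : 0 < ε := by
    apply lt_min <;> linarith
  have hball : Metric.closedBall r ε ⊆ Set.Ioo R₀ Rs := by
    intro x hx
    rw [Metric.mem_closedBall, Real.dist_eq, abs_le] at hx
    have h1 : ε ≤ (r - R₀)/2 := min_le_left _ _
    have h2 : ε ≤ (Rs - r)/2 := min_le_right _ _
    constructor <;> [linarith [hx.1]; linarith [hx.2]]
  set T := Set.Ico R₀ Rs ×ˢ (Set.univ : Set ℝ) with hTdef
  have hTmem : ∀ x ∈ Set.Ioo R₀ Rs, ∀ θ : ℝ, ((x, θ) : ℝ × ℝ) ∈ T := by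
    intro x hx θ
    exact ⟨⟨le_of_lt hx.1, hx.2⟩, Set.mem_univ _⟩
  have hGc := contOn_Gdens (K := K) S.smooth_U S.smooth_A S.smooth_η S.smooth_a
    (hT1' hR₀) (hT2' S)
  have hEc := contOn_Edens S.smooth_U S.smooth_A S.smooth_a (hT1' hR₀) (hT2' S)
  have hKc : IsCompact (Set.Icc (r - ε) (r + ε) ×ˢ Set.Icc (0:ℝ) (2*π)) :=
    isCompact_Icc.prod isCompact_Icc
  have hKT : (Set.Icc (r - ε) (r + ε) ×ˢ Set.Icc (0:ℝ) (2*π)) ⊆ T := by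
    intro p hp
    have hp1 : p.1 ∈ Metric.closedBall r ε := by
      rw [Real.closedBall_eq_Icc]; exact hp.1
    exact hTmem p.1 (hball hp1) p.2
  obtain ⟨C, hC⟩ := hKc.exists_bound_of_continuousOn (hGc.mono hKT)
  have c1 : ∀ᶠ x in nhds r, MeasureTheory.AEStronglyMeasurable
      (fun θ => Edens S.U S.A S.a x θ)
      (MeasureTheory.volume.restrict (Set.uIoc (0:ℝ) (2*π))) := by
    filter_upwards [isOpen_Ioo.mem_nhds ⟨hr1, hr2⟩] with x hx
    exact (contSliceθ hEc (hTmem x hx)).aestronglyMeasurable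
  have c2 : IntervalIntegrable (fun θ => Edens S.U S.A S.a r θ)
      MeasureTheory.volume 0 (2*π) :=
    (contSliceθ hEc (hTmem r ⟨hr1, hr2⟩)).intervalIntegrable _ _
  have c3 : MeasureTheory.AEStronglyMeasurable (fun θ => Gdens K S.U S.A S.η S.a r θ)
      (MeasureTheory.volume.restrict (Set.uIoc (0:ℝ) (2*π))) :=
    (contSliceθ hGc (hTmem r ⟨hr1, hr2⟩)).aestronglyMeasurable
  have c4 : ∀ᵐ θ ∂MeasureTheory.volume, θ ∈ Set.uIoc (0:ℝ) (2*π) →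
      ∀ x ∈ Metric.ball r ε, ‖Gdens K S.U S.A S.η S.a x θ‖ ≤ C := by
    refine MeasureTheory.ae_of_all _ (fun θ hθ x hx => ?_)
    have hθ' : θ ∈ Set.Icc (0:ℝ) (2*π) := by
      rw [Set.uIoc_of_le (by positivity)] at hθ
      exact Set.Ioc_subset_Icc_self hθ
    have hx' : x ∈ Set.Icc (r - ε) (r + ε) := by
      rw [← Real.closedBall_eq_Icc]
      exact Metric.ball_subset_closedBall hx
    exact hC (x, θ) ⟨hx', hθ'⟩
  have c5 : IntervalIntegrable (fun _ : ℝ => C) MeasureTheory.volume 0 (2*π) :=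
    intervalIntegrable_const
  have c6 : ∀ᵐ θ ∂MeasureTheory.volume, θ ∈ Set.uIoc (0:ℝ) (2*π) →
      ∀ x ∈ Metric.ball r ε, HasDerivAt (fun x => Edens S.U S.A S.a x θ)
        (Gdens K S.U S.A S.η S.a x θ) x := by
    refine MeasureTheory.ae_of_all _ (fun θ _ x hx => ?_)
    have hxO : x ∈ Set.Ioo R₀ Rs := hball (Metric.ball_subset_closedBall hx)
    have := hasDerivAt_Edens_slice (η := S.η) (K := K) S.smooth_U S.smooth_A S.smooth_a
        x θ (ne_of_gt (lt_of_lt_of_le hR₀ hxO.1.le)) (ne_of_gt (S.apos x ⟨hxO.1.le, hxO.2⟩ θ))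
        (S.eq_U x ⟨hxO.1.le, hxO.2⟩ θ) (S.eq_A x ⟨hxO.1.le, hxO.2⟩ θ)
        (S.eq_a x ⟨hxO.1.le, hxO.2⟩ θ)
    simpa only [Gdens, Ndens] using this
  have hmain := (intervalIntegral.hasDerivAt_integral_of_dominated_loc_of_deriv_le
    (Metric.ball_mem_nhds r hε) c1 c2 c3 c4 c5 c6).2
  exact hmain

lemma EnK_hasDerivAt (hR₀ : 0 < R₀) {r : ℝ} (hr : r ∈ Set.Ioo R₀ Rs) :
    HasDerivAt (EnK K S.U S.A S.η S.a)
      (∫ θ in (0:ℝ)..(2 * π), GdensK K S.U S.A S.η S.a r θ) r := by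
  obtain ⟨hr1, hr2⟩ := hr
  set ε := min ((r - R₀)/2) ((Rs - r)/2) with hεdef
  have hε : 0 < ε := by
    apply lt_min <;> linarith
  have hball : Metric.closedBall r ε ⊆ Set.Ioo R₀ Rs := by
    intro x hx
    rw [Metric.mem_closedBall, Real.dist_eq, abs_le] at hx
    have h1 : ε ≤ (r - R₀)/2 := min_le_left _ _
    have h2 : ε ≤ (Rs - r)/2 := min_le_right _ _
    constructor <;> [linarith [hx.1]; linarith [hx.2]]
  set T := Set.Ico R₀ Rs ×ˢ (Set.univ : Set ℝ) with hTdef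
  have hTmem : ∀ x ∈ Set.Ioo R₀ Rs, ∀ θ : ℝ, ((x, θ) : ℝ × ℝ) ∈ T := by
    intro x hx θ
    exact ⟨⟨le_of_lt hx.1, hx.2⟩, Set.mem_univ _⟩
  have hGc := contOn_GdensK (K := K) S.smooth_U S.smooth_A S.smooth_η S.smooth_a
    (hT1' hR₀) (hT2' S)
  have hEc := contOn_EdensK (K := K) S.smooth_U S.smooth_A S.smooth_η S.smooth_a (hT1' hR₀) (hT2' S)
  have hKc : IsCompact (Set.Icc (r - ε) (r + ε) ×ˢ Set.Icc (0:ℝ) (2*π)) :=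
    isCompact_Icc.prod isCompact_Icc
  have hKT : (Set.Icc (r - ε) (r + ε) ×ˢ Set.Icc (0:ℝ) (2*π)) ⊆ T := by
    intro p hp
    have hp1 : p.1 ∈ Metric.closedBall r ε := by
      rw [Real.closedBall_eq_Icc]; exact hp.1
    exact hTmem p.1 (hball hp1) p.2
  obtain ⟨C, hC⟩ := hKc.exists_bound_of_continuousOn (hGc.mono hKT)
  have c1 : ∀ᶠ x in nhds r, MeasureTheory.AEStronglyMeasurable
      (fun θ => Edens S.U S.A S.a x θ + K ^ 2 / (4 * x ^ 4) * Real.exp (2 * S.η x θ) * (S.a x θ)⁻¹)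
      (MeasureTheory.volume.restrict (Set.uIoc (0:ℝ) (2*π))) := by
    filter_upwards [isOpen_Ioo.mem_nhds ⟨hr1, hr2⟩] with x hx
    exact (contSliceθ hEc (hTmem x hx)).aestronglyMeasurable
  have c2 : IntervalIntegrable (fun θ => Edens S.U S.A S.a r θ + K ^ 2 / (4 * r ^ 4) * Real.exp (2 * S.η r θ) * (S.a r θ)⁻¹)
      MeasureTheory.volume 0 (2*π) :=
    (contSliceθ hEc (hTmem r ⟨hr1, hr2⟩)).intervalIntegrable _ _
  have c3 : MeasureTheory.AEStronglyMeasurable (fun θ => GdensK K S.U S.A S.η S.a r θ)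
      (MeasureTheory.volume.restrict (Set.uIoc (0:ℝ) (2*π))) :=
    (contSliceθ hGc (hTmem r ⟨hr1, hr2⟩)).aestronglyMeasurable
  have c4 : ∀ᵐ θ ∂MeasureTheory.volume, θ ∈ Set.uIoc (0:ℝ) (2*π) →
      ∀ x ∈ Metric.ball r ε, ‖GdensK K S.U S.A S.η S.a x θ‖ ≤ C := by
    refine MeasureTheory.ae_of_all _ (fun θ hθ x hx => ?_)
    have hθ' : θ ∈ Set.Icc (0:ℝ) (2*π) := by
      rw [Set.uIoc_of_le (by positivity)] at hθ
      exact Set.Ioc_subset_Icc_self hθ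
    have hx' : x ∈ Set.Icc (r - ε) (r + ε) := by
      rw [← Real.closedBall_eq_Icc]
      exact Metric.ball_subset_closedBall hx
    exact hC (x, θ) ⟨hx', hθ'⟩
  have c5 : IntervalIntegrable (fun _ : ℝ => C) MeasureTheory.volume 0 (2*π) :=
    intervalIntegrable_const
  have c6 : ∀ᵐ θ ∂MeasureTheory.volume, θ ∈ Set.uIoc (0:ℝ) (2*π) →
      ∀ x ∈ Metric.ball r ε, HasDerivAt
        (fun x => Edens S.U S.A S.a x θ
          + K ^ 2 / (4 * x ^ 4) * Real.exp (2 * S.η x θ) * (S.a x θ)⁻¹)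
        (GdensK K S.U S.A S.η S.a x θ) x := by
    refine MeasureTheory.ae_of_all _ (fun θ _ x hx => ?_)
    have hxO : x ∈ Set.Ioo R₀ Rs := hball (Metric.ball_subset_closedBall hx)
    have hx0 : x ≠ 0 := ne_of_gt (lt_of_lt_of_le hR₀ hxO.1.le)
    have hax : S.a x θ ≠ 0 := ne_of_gt (S.apos x ⟨hxO.1.le, hxO.2⟩ θ)
    have h1 := hasDerivAt_Edens_slice (η := S.η) (K := K) S.smooth_U S.smooth_A S.smooth_a
        x θ hx0 hax
        (S.eq_U x ⟨hxO.1.le, hxO.2⟩ θ) (S.eq_A x ⟨hxO.1.le, hxO.2⟩ θ)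
        (S.eq_a x ⟨hxO.1.le, hxO.2⟩ θ)
    have h2 := hasDerivAt_Kterm_slice (K := K) S.smooth_U S.smooth_A S.smooth_η S.smooth_a
        x θ hx0 hax (S.eq_a x ⟨hxO.1.le, hxO.2⟩ θ) (S.eq_ηR x ⟨hxO.1.le, hxO.2⟩ θ)
    have h3 := h1.add h2
    have hval : GdensK K S.U S.A S.η S.a x θ =
        divterm S.U S.A S.a x θ
          - K ^ 2 / (2 * x ^ 3) * (Edens S.U S.A S.a x θ * Real.exp (2 * S.η x θ))
          - 2 / x * Ndens S.U S.A S.a x θ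
          + (-(K ^ 2 / x ^ 5) * (Real.exp (2 * S.η x θ) * (S.a x θ)⁻¹)
            + K ^ 2 / (2 * x ^ 3) * (Edens S.U S.A S.a x θ * Real.exp (2 * S.η x θ))) := by
      simp only [GdensK]; ring
    rw [hval]
    simpa only [Ndens, Pi.add_def] using h3
  have hmain := (intervalIntegral.hasDerivAt_integral_of_dominated_loc_of_deriv_le
    (Metric.ball_mem_nhds r hε) c1 c2 c3 c4 c5 c6).2
  exact hmain

lemma slice_mem (hR₀ : 0 < R₀) {r : ℝ} (hr : r ∈ Set.Ico R₀ Rs) :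
    ∀ θ : ℝ, ((r, θ) : ℝ × ℝ) ∈ (Set.Ico R₀ Rs ×ˢ (Set.univ : Set ℝ)) :=
  fun θ => ⟨hr, Set.mem_univ _⟩

lemma integral_Gdens (hR₀ : 0 < R₀) {r : ℝ} (hr : r ∈ Set.Ioo R₀ Rs) :
    ∫ θ in (0:ℝ)..(2*π), Gdens K S.U S.A S.η S.a r θ
      = -(K^2/(2*r^3)) * (∫ θ in (0:ℝ)..(2*π), Edens S.U S.A S.a r θ * Real.exp (2*S.η r θ))
        - (2/r) * (∫ θ in (0:ℝ)..(2*π), Ndens S.U S.A S.a r θ) := by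
  have hrD : r ∈ Set.Ico R₀ Rs := ⟨hr.1.le, hr.2⟩
  have hr0 : r ≠ 0 := ne_of_gt (lt_of_lt_of_le hR₀ hrD.1)
  have hmem := slice_mem (Rs := Rs) hR₀ hrD
  have cdiv : Continuous (fun θ => divterm S.U S.A S.a r θ) :=
    contSliceθ (contOn_divterm S.smooth_U S.smooth_A S.smooth_a (hT1' hR₀)) hmem
  have cE : Continuous (fun θ => Edens S.U S.A S.a r θ) :=
    contSliceθ (contOn_Edens S.smooth_U S.smooth_A S.smooth_a (hT1' hR₀) (hT2' S)) hmem
  have cN : Continuous (fun θ => Ndens S.U S.A S.a r θ) :=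
    contSliceθ (contOn_Ndens S.smooth_U S.smooth_A S.smooth_a (hT1' hR₀) (hT2' S)) hmem
  have cEe : Continuous (fun θ => Edens S.U S.A S.a r θ * Real.exp (2*S.η r θ)) :=
    cE.mul (contSliceθ (contOn_expη S.smooth_η).continuousOn hmem)
  have h1 : IntervalIntegrable (fun θ => divterm S.U S.A S.a r θ)
      MeasureTheory.volume 0 (2*π) := cdiv.intervalIntegrable _ _
  have h2a : IntervalIntegrable
      (fun θ => K^2/(2*r^3) * (Edens S.U S.A S.a r θ * Real.exp (2*S.η r θ)))
      MeasureTheory.volume 0 (2*π) := (continuous_const.mul cEe).intervalIntegrable _ _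
  have h2b : IntervalIntegrable (fun θ => (2/r) * Ndens S.U S.A S.a r θ)
      MeasureTheory.volume 0 (2*π) := (continuous_const.mul cN).intervalIntegrable _ _
  calc ∫ θ in (0:ℝ)..(2*π), Gdens K S.U S.A S.η S.a r θ
      = ∫ θ in (0:ℝ)..(2*π), (divterm S.U S.A S.a r θ
          - (K^2/(2*r^3) * (Edens S.U S.A S.a r θ * Real.exp (2*S.η r θ))
            + (2/r) * Ndens S.U S.A S.a r θ)) := by
        apply intervalIntegral.integral_congr
        intro θ _
        simp only [Gdens]; ring
    _ = (∫ θ in (0:ℝ)..(2*π), divterm S.U S.A S.a r θ)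
        - ((∫ θ in (0:ℝ)..(2*π), K^2/(2*r^3) * (Edens S.U S.A S.a r θ * Real.exp (2*S.η r θ)))
          + ∫ θ in (0:ℝ)..(2*π), (2/r) * Ndens S.U S.A S.a r θ) := by
        rw [intervalIntegral.integral_sub h1 (h2a.add h2b),
          intervalIntegral.integral_add h2a h2b]
    _ = _ := by
        rw [integral_divterm_zero S.smooth_U S.smooth_A S.smooth_a
          S.periodic_U S.periodic_A S.periodic_a hr0,
          intervalIntegral.integral_const_mul, intervalIntegral.integral_const_mul]
        ring

lemma integral_GdensK (hR₀ : 0 < R₀) {r : ℝ} (hr : r ∈ Set.Ioo R₀ Rs) :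
    ∫ θ in (0:ℝ)..(2*π), GdensK K S.U S.A S.η S.a r θ
      = -(K^2/r^5) * (∫ θ in (0:ℝ)..(2*π), (S.a r θ)⁻¹ * Real.exp (2*S.η r θ))
        - (2/r) * (∫ θ in (0:ℝ)..(2*π), Ndens S.U S.A S.a r θ) := by
  have hrD : r ∈ Set.Ico R₀ Rs := ⟨hr.1.le, hr.2⟩
  have hr0 : r ≠ 0 := ne_of_gt (lt_of_lt_of_le hR₀ hrD.1)
  have hmem := slice_mem (Rs := Rs) hR₀ hrD
  have cdiv : Continuous (fun θ => divterm S.U S.A S.a r θ) :=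
    contSliceθ (contOn_divterm S.smooth_U S.smooth_A S.smooth_a (hT1' hR₀)) hmem
  have cN : Continuous (fun θ => Ndens S.U S.A S.a r θ) :=
    contSliceθ (contOn_Ndens S.smooth_U S.smooth_A S.smooth_a (hT1' hR₀) (hT2' S)) hmem
  have cInv : Continuous (fun θ => (S.a r θ)⁻¹ * Real.exp (2*S.η r θ)) := by
    have : Continuous (fun θ => (S.a r θ)⁻¹) :=
      contSliceθ ((contv S.smooth_a).continuousOn.inv₀ (hT2' S)) hmem
    exact this.mul (contSliceθ (contOn_expη S.smooth_η).continuousOn hmem)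
  have h1 : IntervalIntegrable (fun θ => divterm S.U S.A S.a r θ)
      MeasureTheory.volume 0 (2*π) := cdiv.intervalIntegrable _ _
  have h2a : IntervalIntegrable
      (fun θ => K^2/r^5 * ((S.a r θ)⁻¹ * Real.exp (2*S.η r θ)))
      MeasureTheory.volume 0 (2*π) := (continuous_const.mul cInv).intervalIntegrable _ _
  have h2b : IntervalIntegrable (fun θ => (2/r) * Ndens S.U S.A S.a r θ)
      MeasureTheory.volume 0 (2*π) := (continuous_const.mul cN).intervalIntegrable _ _
  calc ∫ θ in (0:ℝ)..(2*π), GdensK K S.U S.A S.η S.a r θ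
      = ∫ θ in (0:ℝ)..(2*π), (divterm S.U S.A S.a r θ
          - (K^2/r^5 * ((S.a r θ)⁻¹ * Real.exp (2*S.η r θ))
            + (2/r) * Ndens S.U S.A S.a r θ)) := by
        apply intervalIntegral.integral_congr
        intro θ _
        simp only [GdensK]; ring
    _ = (∫ θ in (0:ℝ)..(2*π), divterm S.U S.A S.a r θ)
        - ((∫ θ in (0:ℝ)..(2*π), K^2/r^5 * ((S.a r θ)⁻¹ * Real.exp (2*S.η r θ)))
          + ∫ θ in (0:ℝ)..(2*π), (2/r) * Ndens S.U S.A S.a r θ) := by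
        rw [intervalIntegral.integral_sub h1 (h2a.add h2b),
          intervalIntegral.integral_add h2a h2b]
    _ = _ := by
        rw [integral_divterm_zero S.smooth_U S.smooth_A S.smooth_a
          S.periodic_U S.periodic_A S.periodic_a hr0,
          intervalIntegral.integral_const_mul, intervalIntegral.integral_const_mul]
        ring

lemma En_contOn (hR₀ : 0 < R₀) : ContinuousOn (En S.U S.A S.a) (Set.Ico R₀ Rs) := by
  intro x₀ hx₀
  have hEc := contOn_Edens S.smooth_U S.smooth_A S.smooth_a (hT1' (Rs := Rs) hR₀) (hT2' S)
  set b := (x₀ + Rs)/2 with hbdef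
  have hx₀b : x₀ < b := by simp only [hbdef]; linarith [hx₀.2]
  have hbRs : b < Rs := by simp only [hbdef]; linarith [hx₀.2]
  have hKc : IsCompact (Set.Icc R₀ b ×ˢ Set.Icc (0:ℝ) (2*π)) :=
    isCompact_Icc.prod isCompact_Icc
  have hKT : (Set.Icc R₀ b ×ˢ Set.Icc (0:ℝ) (2*π)) ⊆ Set.Ico R₀ Rs ×ˢ Set.univ := by
    intro p hp
    exact ⟨⟨hp.1.1, lt_of_le_of_lt hp.1.2 hbRs⟩, Set.mem_univ _⟩
  obtain ⟨C, hC⟩ := hKc.exists_bound_of_continuousOn (hEc.mono hKT)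
  apply intervalIntegral.continuousWithinAt_of_dominated_interval
    (bound := fun _ => C) (F := fun x θ => Edens S.U S.A S.a x θ)
  · filter_upwards [self_mem_nhdsWithin] with x hx
    exact (contSliceθ hEc (slice_mem hR₀ hx)).aestronglyMeasurable
  · have hev : ∀ᶠ x in nhdsWithin x₀ (Set.Ico R₀ Rs), x < b :=
      ((isOpen_Iio.eventually_mem hx₀b).filter_mono nhdsWithin_le_nhds)
    filter_upwards [self_mem_nhdsWithin, hev] with x hx hxb
    refine MeasureTheory.ae_of_all _ (fun θ hθ => ?_)
    have hθ' : θ ∈ Set.Icc (0:ℝ) (2*π) := by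
      rw [Set.uIoc_of_le (by positivity)] at hθ
      exact Set.Ioc_subset_Icc_self hθ
    exact hC (x, θ) ⟨⟨hx.1, hxb.le⟩, hθ'⟩
  · exact intervalIntegrable_const
  · refine MeasureTheory.ae_of_all _ (fun θ hθ => ?_)
    exact (contSliceR hEc (fun x hx => slice_mem hR₀ hx θ) x₀ hx₀)

lemma EnK_contOn (hR₀ : 0 < R₀) : ContinuousOn (EnK K S.U S.A S.η S.a) (Set.Ico R₀ Rs) := by
  intro x₀ hx₀
  have hEc := contOn_EdensK (K := K) S.smooth_U S.smooth_A S.smooth_η S.smooth_a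
    (hT1' (Rs := Rs) hR₀) (hT2' S)
  set b := (x₀ + Rs)/2 with hbdef
  have hx₀b : x₀ < b := by simp only [hbdef]; linarith [hx₀.2]
  have hbRs : b < Rs := by simp only [hbdef]; linarith [hx₀.2]
  have hKc : IsCompact (Set.Icc R₀ b ×ˢ Set.Icc (0:ℝ) (2*π)) :=
    isCompact_Icc.prod isCompact_Icc
  have hKT : (Set.Icc R₀ b ×ˢ Set.Icc (0:ℝ) (2*π)) ⊆ Set.Ico R₀ Rs ×ˢ Set.univ := by
    intro p hp
    exact ⟨⟨hp.1.1, lt_of_le_of_lt hp.1.2 hbRs⟩, Set.mem_univ _⟩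
  obtain ⟨C, hC⟩ := hKc.exists_bound_of_continuousOn (hEc.mono hKT)
  apply intervalIntegral.continuousWithinAt_of_dominated_interval
    (bound := fun _ => C)
    (F := fun x θ => Edens S.U S.A S.a x θ
      + K ^ 2 / (4 * x ^ 4) * Real.exp (2 * S.η x θ) * (S.a x θ)⁻¹)
  · filter_upwards [self_mem_nhdsWithin] with x hx
    exact (contSliceθ hEc (slice_mem hR₀ hx)).aestronglyMeasurable
  · have hev : ∀ᶠ x in nhdsWithin x₀ (Set.Ico R₀ Rs), x < b :=
      ((isOpen_Iio.eventually_mem hx₀b).filter_mono nhdsWithin_le_nhds)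
    filter_upwards [self_mem_nhdsWithin, hev] with x hx hxb
    refine MeasureTheory.ae_of_all _ (fun θ hθ => ?_)
    have hθ' : θ ∈ Set.Icc (0:ℝ) (2*π) := by
      rw [Set.uIoc_of_le (by positivity)] at hθ
      exact Set.Ioc_subset_Icc_self hθ
    exact hC (x, θ) ⟨⟨hx.1, hxb.le⟩, hθ'⟩
  · exact intervalIntegrable_const
  · refine MeasureTheory.ae_of_all _ (fun θ hθ => ?_)
    exact (contSliceR hEc (fun x hx => slice_mem hR₀ hx θ) x₀ hx₀)

lemma Edens_nonneg {r θ : ℝ} (h : 0 < a r θ) : 0 ≤ Edens U A a r θ := by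
  have h1 : (0:ℝ) ≤ (a r θ)⁻¹ := inv_nonneg.2 h.le
  have h2 : (0:ℝ) ≤ exp (4 * U r θ) / (4 * r ^ 2) := by positivity
  simp only [Edens]
  have := sq_nonneg (pd1 U r θ)
  apply add_nonneg (add_nonneg (mul_nonneg h1 (sq_nonneg _)) (mul_nonneg h.le (sq_nonneg _)))
  exact mul_nonneg h2 (add_nonneg (mul_nonneg h1 (sq_nonneg _)) (mul_nonneg h.le (sq_nonneg _)))

lemma Ndens_nonneg {r θ : ℝ} (h : 0 < a r θ) : 0 ≤ Ndens U A a r θ := by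
  have h1 : (0:ℝ) ≤ (a r θ)⁻¹ := inv_nonneg.2 h.le
  have h2 : (0:ℝ) ≤ exp (4 * U r θ) / (4 * r ^ 2) := by positivity
  simp only [Ndens]
  exact add_nonneg (mul_nonneg h1 (sq_nonneg _))
    (mul_nonneg (mul_nonneg h2 h.le) (sq_nonneg _))

end main

end Helpers

/-- **Monotonicity and derivative identities for the areal energies.**
For a smooth areal solution on `[R₀,R*)`, the energies `𝓔` and `𝓔_K` are
non-increasing, and their derivatives are given by the stated identities. -/
theorem areal_energy_monotonicity
    (R₀ Rs K : ℝ) (hR₀ : 0 < R₀) (hRs : R₀ < Rs)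
    (S : ArealSol (Set.Ico R₀ Rs) K) :
    (∀ r r' : ℝ, R₀ ≤ r → r ≤ r' → r' < Rs →
      En S.U S.A S.a r' ≤ En S.U S.A S.a r ∧
      EnK K S.U S.A S.η S.a r' ≤ EnK K S.U S.A S.η S.a r) ∧
    (∀ r ∈ Set.Ioo R₀ Rs,
      HasDerivAt (En S.U S.A S.a)
        (-(K ^ 2 / (2 * r ^ 3)) *
            (∫ θ in (0:ℝ)..(2 * Real.pi),
              Edens S.U S.A S.a r θ * Real.exp (2 * S.η r θ))
          - (2 / r) *
            (∫ θ in (0:ℝ)..(2 * Real.pi),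
              ((S.a r θ)⁻¹ * (pd1 S.U r θ) ^ 2
                + Real.exp (4 * S.U r θ) / (4 * r ^ 2) * S.a r θ * (pd2 S.A r θ) ^ 2)))
        r ∧
      HasDerivAt (EnK K S.U S.A S.η S.a)
        (-(K ^ 2 / r ^ 5) *
            (∫ θ in (0:ℝ)..(2 * Real.pi), (S.a r θ)⁻¹ * Real.exp (2 * S.η r θ))
          - (2 / r) *
            (∫ θ in (0:ℝ)..(2 * Real.pi),
              ((S.a r θ)⁻¹ * (pd1 S.U r θ) ^ 2
                + Real.exp (4 * S.U r θ) / (4 * r ^ 2) * S.a r θ * (pd2 S.A r θ) ^ 2)))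
        r) := by
  have hsignE : ∀ x ∈ Set.Ioo R₀ Rs,
      (∫ θ in (0:ℝ)..(2*π), Gdens K S.U S.A S.η S.a x θ) ≤ 0 := by
    intro x hx
    rw [integral_Gdens S hR₀ hx]
    have hx0 : (0:ℝ) < x := lt_trans hR₀ hx.1
    have hc1 : (0:ℝ) ≤ K ^ 2 / (2 * x ^ 3) := by positivity
    have hc2 : (0:ℝ) ≤ 2 / x := by positivity
    have I1 : (0:ℝ) ≤ ∫ θ in (0:ℝ)..(2*π), Edens S.U S.A S.a x θ * Real.exp (2*S.η x θ) := by
      apply intervalIntegral.integral_nonneg (by positivity)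
      intro θ _
      exact mul_nonneg (Edens_nonneg (S.apos x ⟨hx.1.le, hx.2⟩ θ)) (Real.exp_pos _).le
    have I2 : (0:ℝ) ≤ ∫ θ in (0:ℝ)..(2*π), Ndens S.U S.A S.a x θ := by
      apply intervalIntegral.integral_nonneg (by positivity)
      intro θ _
      exact Ndens_nonneg (S.apos x ⟨hx.1.le, hx.2⟩ θ)
    have := mul_nonneg hc1 I1
    have := mul_nonneg hc2 I2
    linarith
  have hsignEK : ∀ x ∈ Set.Ioo R₀ Rs,
      (∫ θ in (0:ℝ)..(2*π), GdensK K S.U S.A S.η S.a x θ) ≤ 0 := by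
    intro x hx
    rw [integral_GdensK S hR₀ hx]
    have hx0 : (0:ℝ) < x := lt_trans hR₀ hx.1
    have hc1 : (0:ℝ) ≤ K ^ 2 / x ^ 5 := by positivity
    have hc2 : (0:ℝ) ≤ 2 / x := by positivity
    have I1 : (0:ℝ) ≤ ∫ θ in (0:ℝ)..(2*π), (S.a x θ)⁻¹ * Real.exp (2*S.η x θ) := by
      apply intervalIntegral.integral_nonneg (by positivity)
      intro θ _
      exact mul_nonneg (inv_nonneg.2 (S.apos x ⟨hx.1.le, hx.2⟩ θ).le) (Real.exp_pos _).le
    have I2 : (0:ℝ) ≤ ∫ θ in (0:ℝ)..(2*π), Ndens S.U S.A S.a x θ := by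
      apply intervalIntegral.integral_nonneg (by positivity)
      intro θ _
      exact Ndens_nonneg (S.apos x ⟨hx.1.le, hx.2⟩ θ)
    have := mul_nonneg hc1 I1
    have := mul_nonneg hc2 I2
    linarith
  constructor
  · intro r r' hRr hrr' hr'Rs
    have hIcc : Set.Icc r r' ⊆ Set.Ico R₀ Rs :=
      fun x hx => ⟨le_trans hRr hx.1, lt_of_le_of_lt hx.2 hr'Rs⟩
    have hIoo : Set.Ioo r r' ⊆ Set.Ioo R₀ Rs :=
      fun x hx => ⟨lt_of_le_of_lt hRr hx.1, lt_trans hx.2 hr'Rs⟩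
    constructor
    · have H : AntitoneOn (En S.U S.A S.a) (Set.Icc r r') := by
        apply antitoneOn_of_deriv_nonpos (convex_Icc r r')
          ((En_contOn S hR₀).mono hIcc)
        · rw [interior_Icc]
          intro x hx
          exact (En_hasDerivAt S hR₀ (hIoo hx)).differentiableAt.differentiableWithinAt
        · rw [interior_Icc]
          intro x hx
          rw [(En_hasDerivAt S hR₀ (hIoo hx)).deriv]
          exact hsignE x (hIoo hx)
      exact H ⟨le_refl r, hrr'⟩ ⟨hrr', le_refl r'⟩ hrr'
    · have H : AntitoneOn (EnK K S.U S.A S.η S.a) (Set.Icc r r') := by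
        apply antitoneOn_of_deriv_nonpos (convex_Icc r r')
          ((EnK_contOn S hR₀).mono hIcc)
        · rw [interior_Icc]
          intro x hx
          exact (EnK_hasDerivAt S hR₀ (hIoo hx)).differentiableAt.differentiableWithinAt
        · rw [interior_Icc]
          intro x hx
          rw [(EnK_hasDerivAt S hR₀ (hIoo hx)).deriv]
          exact hsignEK x (hIoo hx)
      exact H ⟨le_refl r, hrr'⟩ ⟨hrr', le_refl r'⟩ hrr'
  · intro r hr
    constructor
    · have h := En_hasDerivAt S hR₀ hr
      rw [integral_Gdens S hR₀ hr] at h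
      simpa only [Ndens] using h
    · have h := EnK_hasDerivAt S hR₀ hr
      rw [integral_GdensK S hR₀ hr] at h
      simpa only [Ndens] using h
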